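/- Let μ₀, μ₁ ∈ ℝ, σ₀, σ₁ > 0, x₀ ∈ ℝ, and define v(x,t) = (σ₁² t (x − μ₀) − σ₀² (1−t)(x − μ₁)) / (σ₁² t² + σ₀² (1−t)²) and x(t) = (1−t)μ₀ + t μ₁ + (x₀ − μ₀) √((σ₁/σ₀)² t² + (1−t)²) for t ∈ [0,1]. Then x(0) = x₀, x(t) is differentiable on [0,1] and satisfies the ODE x'(t) = v(x(t), t) for all t ∈ [0,1], and the terminal point is x(1) = μ₁ + (x₀ − μ₀) σ₁/σ₀, i.e., the endpoint map x₀ ↦ x(1) is the Monge optimal-transport map between N(μ₀, σ₀²) and N(μ₁, σ₁²). -/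

import Mathlib

open Real

/-- Exact trajectory of the explicit flow-matching ODE between two Gaussians:
`x(t) = (1−t)μ₀ + tμ₁ + (x₀−μ₀)√((σ₁/σ₀)² t² + (1−t)²)` starts at `x₀`, solves
`x' = v(x,t)` on `[0,1]`, and ends at the Monge optimal-transport image
`μ₁ + (x₀−μ₀)σ₁/σ₀`. -/
theorem gaussian_flow_matching_trajectory (μ₀ μ₁ σ₀ σ₁ x₀ : ℝ)
    (hσ₀ : 0 < σ₀) (hσ₁ : 0 < σ₁)
    (v : ℝ → ℝ → ℝ)
    (hv : ∀ x t, v x t =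
      (σ₁ ^ 2 * t * (x - μ₀) - σ₀ ^ 2 * (1 - t) * (x - μ₁)) /
        (σ₁ ^ 2 * t ^ 2 + σ₀ ^ 2 * (1 - t) ^ 2))
    (x : ℝ → ℝ)
    (hx : ∀ t, x t = (1 - t) * μ₀ + t * μ₁ +
      (x₀ - μ₀) * Real.sqrt ((σ₁ / σ₀) ^ 2 * t ^ 2 + (1 - t) ^ 2)) :
    x 0 = x₀ ∧
    (∀ t ∈ Set.Icc (0 : ℝ) 1, HasDerivAt x (v (x t) t) t) ∧
    x 1 = μ₁ + (x₀ - μ₀) * (σ₁ / σ₀) := by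
  have hσ₀' : σ₀ ≠ 0 := ne_of_gt hσ₀
  have hxf : x = fun t => (1 - t) * μ₀ + t * μ₁ +
      (x₀ - μ₀) * Real.sqrt ((σ₁ / σ₀) ^ 2 * t ^ 2 + (1 - t) ^ 2) := funext hx
  subst hxf
  refine ⟨by simp, ?_, ?_⟩
  · intro t ht
    have hgpos : 0 < (σ₁ / σ₀) ^ 2 * t ^ 2 + (1 - t) ^ 2 := by
      rcases eq_or_ne t 1 with h | h
      · subst h
        have : (σ₁ / σ₀) ^ 2 > 0 := by positivity
        nlinarith
      · have h1 : (1 : ℝ) - t ≠ 0 := sub_ne_zero.mpr (Ne.symm h)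
        have : (1 - t) ^ 2 > 0 := by positivity
        nlinarith [sq_nonneg (σ₁ / σ₀ * t)]
    set s := Real.sqrt ((σ₁ / σ₀) ^ 2 * t ^ 2 + (1 - t) ^ 2) with hs
    have hs0 : 0 < s := Real.sqrt_pos.mpr hgpos
    have hs2 : s ^ 2 = (σ₁ / σ₀) ^ 2 * t ^ 2 + (1 - t) ^ 2 := Real.sq_sqrt hgpos.le
    have hDpos : 0 < σ₁ ^ 2 * t ^ 2 + σ₀ ^ 2 * (1 - t) ^ 2 := by
      have : σ₁ ^ 2 * t ^ 2 + σ₀ ^ 2 * (1 - t) ^ 2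
          = σ₀ ^ 2 * ((σ₁ / σ₀) ^ 2 * t ^ 2 + (1 - t) ^ 2) := by
        field_simp
      rw [this]; positivity
    have hg : HasDerivAt (fun u : ℝ => (σ₁ / σ₀) ^ 2 * u ^ 2 + (1 - u) ^ 2)
        ((σ₁ / σ₀) ^ 2 * (2 * t) + 2 * (1 - t) * (-1)) t := by
      have h1 : HasDerivAt (fun u : ℝ => u ^ 2) (2 * t) t := by
        simpa using hasDerivAt_pow 2 t
      have h2 : HasDerivAt (fun u : ℝ => (1 - u) ^ 2) (2 * (1 - t) * (-1)) t := by
        have := ((hasDerivAt_id t).const_sub 1).fun_pow 2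
        simpa [mul_comm] using this
      simpa using (h1.const_mul ((σ₁ / σ₀) ^ 2)).fun_add h2
    have hsq : HasDerivAt (fun u : ℝ => Real.sqrt ((σ₁ / σ₀) ^ 2 * u ^ 2 + (1 - u) ^ 2))
        (((σ₁ / σ₀) ^ 2 * (2 * t) + 2 * (1 - t) * (-1)) / (2 * s)) t :=
      hg.sqrt (ne_of_gt hgpos)
    have hlin : HasDerivAt (fun u : ℝ => (1 - u) * μ₀ + u * μ₁) (-μ₀ + μ₁) t := by
      have h1 := ((hasDerivAt_id t).const_sub 1).mul_const μ₀
      have h2 := (hasDerivAt_id t).mul_const μ₁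
      simpa using h1.fun_add h2
    have hfull := hlin.fun_add (hsq.const_mul (x₀ - μ₀))
    refine hfull.congr_deriv ?_
    rw [hv]
    beta_reduce
    rw [← hs]
    clear_value s
    have hs2' : s * s = (σ₁ / σ₀) ^ 2 * t ^ 2 + (1 - t) ^ 2 := by
      nlinarith [hs2]
    rw [eq_div_iff (ne_of_gt hDpos)]
    field_simp
    have hs2'' : σ₀ ^ 2 * s ^ 2 = σ₁ ^ 2 * t ^ 2 + σ₀ ^ 2 * (1 - t) ^ 2 := by
      rw [hs2]; field_simp
    linear_combination (-(x₀ - μ₀) * (σ₁ ^ 2 * t - σ₀ ^ 2 * (1 - t))) * hs2''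
  · simp [Real.sqrt_sq (div_nonneg hσ₁.le hσ₀.le)]
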